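/- GME of the qubit triangle network: let p ∈ [0,1] with p > (2√5 − 3)/3. Consider the six-qubit state ρ_p ⊗ ρ_p ⊗ ρ_p, where the three 2-dimensional isotropic states are shared between qubit pairs A₁B₁, A₂C₁, and B₂C₂ respectively. Regarded as a tripartite state of parties A = (A₁,A₂), B = (B₁,B₂), C = (C₁,C₂), this state is genuinely multipartite entangled, i.e. not biseparable with respect to the party bipartitions A|BC, B|AC, C|AB. -/

import Mathlib

open Matrix Finset
open scoped ComplexOrder

attribute [local instance] Classical.propDecidable

noncomputable section

/-- The rank-one matrix `|v⟩⟨v|` associated to a vector `v`. -/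
def vecProj {D : Type*} [Fintype D] (v : D → ℂ) : Matrix D D ℂ :=
  Matrix.of fun i j => v i * star (v j)

/-- `v` is a unit vector. -/
def UnitVec {D : Type*} [Fintype D] (v : D → ℂ) : Prop :=
  ∑ i, star (v i) * v i = 1

/-- A quantum state: positive semidefinite matrix of trace one. -/
def IsState {D : Type*} [Fintype D] [DecidableEq D] (ρ : Matrix D D ℂ) : Prop :=
  ρ.PosSemidef ∧ ρ.trace = 1

/-- The maximally entangled vector `(1/√d) ∑ᵢ |ii⟩` on `ℂ^d ⊗ ℂ^d`. -/
def maxEntVec (d : ℕ) : Fin d × Fin d → ℂ :=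
  fun q => if q.1 = q.2 then (((Real.sqrt d)⁻¹ : ℝ) : ℂ) else 0

/-- The `d`-dimensional isotropic state with visibility `p`:
`ρ_p = p·φ_d⁺ + (1-p)·𝟙/d²`. -/
def isoState (d : ℕ) (p : ℝ) : Matrix (Fin d × Fin d) (Fin d × Fin d) ℂ :=
  (p : ℂ) • vecProj (maxEntVec d) +
    ((((1 - p) / (d ^ 2 : ℝ)) : ℝ) : ℂ) •
      (1 : Matrix (Fin d × Fin d) (Fin d × Fin d) ℂ)

/-- A vector on a tripartite system `α × β × γ` is product across one of the three
bipartitions of the parties. -/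
def ProdAcross3 {α β γ : Type*} (v : α × β × γ → ℂ) : Prop :=
  (∃ (f : α → ℂ) (g : β × γ → ℂ), ∀ q, v q = f q.1 * g q.2) ∨
  (∃ (f : β → ℂ) (g : α × γ → ℂ), ∀ q, v q = f q.2.1 * g (q.1, q.2.2)) ∨
  (∃ (f : γ → ℂ) (g : α × β → ℂ), ∀ q, v q = f q.2.2 * g (q.1, q.2.1))

/-- Biseparability of a tripartite state with parties `α`, `β`, `γ`. -/
def Bisep3 {α β γ : Type*} [Fintype α] [Fintype β] [Fintype γ]
    (ρ : Matrix (α × β × γ) (α × β × γ) ℂ) : Prop :=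
  ∃ (m : ℕ) (w : Fin m → ℝ) (u : Fin m → α × β × γ → ℂ),
    (∀ k, 0 ≤ w k) ∧ (∑ k, w k = 1) ∧
    (∀ k, UnitVec (u k) ∧ ProdAcross3 (u k)) ∧
    ρ = ∑ k, (w k : ℂ) • vecProj (u k)

/-- The triangle network state: isotropic states with visibility `p` on the subsystem
pairs `A₁B₁`, `A₂C₁` and `B₂C₂`, with indices grouped by party as
`(A₁ × A₂) × (B₁ × B₂) × (C₁ × C₂)`. -/
def triangleNet (d : ℕ) (p : ℝ) :
    Matrix ((Fin d × Fin d) × (Fin d × Fin d) × (Fin d × Fin d))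
           ((Fin d × Fin d) × (Fin d × Fin d) × (Fin d × Fin d)) ℂ :=
  Matrix.of fun x y =>
    isoState d p (x.1.1, x.2.1.1) (y.1.1, y.2.1.1) *
    isoState d p (x.1.2, x.2.2.1) (y.1.2, y.2.2.1) *
    isoState d p (x.2.1.2, x.2.2.2) (y.2.1.2, y.2.2.2)

namespace TriangleGME

abbrev K2 := Fin 2 × Fin 2
abbrev JT := K2 × K2 × K2

/-- sum of squared norms -/
def nsq {ι : Type*} [Fintype ι] (w : ι → ℂ) : ℝ := ∑ x, Complex.normSq (w x)

lemma nsq_nonneg {ι : Type*} [Fintype ι] (w : ι → ℂ) : 0 ≤ nsq w :=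
  Finset.sum_nonneg fun _ _ => Complex.normSq_nonneg _

/-- complex inner product (conj-linear in first argument) -/
def cip {ι : Type*} [Fintype ι] (a b : ι → ℂ) : ℂ := ∑ x, star (a x) * b x

lemma cip_self {ι : Type*} [Fintype ι] (w : ι → ℂ) : cip w w = (nsq w : ℂ) := by
  unfold cip nsq
  push_cast
  refine Finset.sum_congr rfl fun x _ => ?_
  rw [Complex.star_def, mul_comm, Complex.mul_conj]

lemma nsq_comp {ι τ : Type*} [Fintype ι] [Fintype τ] (e : τ ≃ ι) (w : ι → ℂ) :
    nsq (fun t => w (e t)) = nsq w :=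
  Fintype.sum_equiv e _ _ (fun _ => rfl)

lemma cip_comp {ι τ : Type*} [Fintype ι] [Fintype τ] (e : τ ≃ ι) (a b : ι → ℂ) :
    cip (fun t => a (e t)) (fun t => b (e t)) = cip a b :=
  Fintype.sum_equiv e _ _ (fun _ => rfl)

section Generic
variable {σ : Type*} [Fintype σ]

def dsum (w : K2 × σ → ℂ) (s : σ) : ℂ := ∑ i : Fin 2, w ((i, i), s)

def apE (w : K2 × σ → ℂ) : K2 × σ → ℂ :=
  fun p => w p - (1/2) * (if p.1.1 = p.1.2 then 1 else 0) * dsum w p.2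

lemma dsum_apE (w : K2 × σ → ℂ) (s : σ) : dsum (apE w) s = 0 := by
  simp [dsum, apE, Fin.sum_univ_two]

lemma apE_idem (w : K2 × σ → ℂ) : apE (apE w) = apE w := by
  funext p
  show apE w p - (1/2) * _ * dsum (apE w) p.2 = apE w p
  rw [dsum_apE]
  ring

lemma cip_apE_right (a b : K2 × σ → ℂ) :
    cip a (apE b) = cip a b - (1/2) * ∑ s, star (dsum a s) * dsum b s := by
  have step : ∀ p : K2 × σ, star (a p) * apE b p
      = star (a p) * b p
        - (1/2) * ((if p.1.1 = p.1.2 then (1:ℂ) else 0) * star (a p) * dsum b p.2) := by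
    intro p; unfold apE; ring
  unfold cip
  rw [Finset.sum_congr rfl (fun p _ => step p), Finset.sum_sub_distrib]
  congr 1
  rw [← Finset.mul_sum]
  congr 1
  rw [Fintype.sum_prod_type, Finset.sum_comm]
  refine Finset.sum_congr rfl fun s _ => ?_
  rw [Fintype.sum_prod_type]
  simp [dsum, Fin.sum_univ_two, star_add]
  ring

lemma cip_apE_left (a b : K2 × σ → ℂ) :
    cip (apE a) b = cip a b - (1/2) * ∑ s, star (dsum a s) * dsum b s := by
  have step : ∀ p : K2 × σ, star (apE a p) * b p
      = star (a p) * b p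
        - (1/2) * ((if p.1.1 = p.1.2 then (1:ℂ) else 0) * star (dsum a p.2) * b p) := by
    intro p; unfold apE
    push_cast [star_sub, star_mul']
    simp only [star_one, star_zero, star_div₀, star_ofNat, apply_ite (star : ℂ → ℂ)]
    ring
  unfold cip
  rw [Finset.sum_congr rfl (fun p _ => step p), Finset.sum_sub_distrib]
  congr 1
  rw [← Finset.mul_sum]
  congr 1
  rw [Fintype.sum_prod_type, Finset.sum_comm]
  refine Finset.sum_congr rfl fun s _ => ?_
  rw [Fintype.sum_prod_type]
  simp [dsum, Fin.sum_univ_two, star_add]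
  ring

lemma cip_apE_apE (a b : K2 × σ → ℂ) : cip (apE a) (apE b) = cip a (apE b) := by
  rw [cip_apE_left]
  simp [dsum_apE]

lemma apE_adj (a b : K2 × σ → ℂ) : cip (apE a) b = cip a (apE b) := by
  rw [cip_apE_left, cip_apE_right]

lemma nsq_apE (w : K2 × σ → ℂ) :
    nsq (apE w) = nsq w - (1/2) * ∑ s, Complex.normSq (dsum w s) := by
  have h1 : cip (apE w) (apE w) = cip w (apE w) := cip_apE_apE w w
  rw [cip_apE_right w w] at h1
  rw [cip_self, cip_self] at h1
  have h2 : ∑ s, star (dsum w s) * dsum w s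
      = ((∑ s, Complex.normSq (dsum w s) : ℝ) : ℂ) := by
    push_cast
    refine Finset.sum_congr rfl fun s _ => ?_
    rw [Complex.star_def, mul_comm, Complex.mul_conj]
  rw [h2] at h1
  refine Complex.ofReal_injective ?_
  push_cast
  rw [h1]
  push_cast
  ring

lemma nsq_apE_le (w : K2 × σ → ℂ) : nsq (apE w) ≤ nsq w := by
  rw [nsq_apE]
  have : 0 ≤ ∑ s, Complex.normSq (dsum w s) :=
    Finset.sum_nonneg fun _ _ => Complex.normSq_nonneg _
  linarith

end Generic

/-! ### Slot operators on the three links -/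

def sw2 : JT ≃ K2 × (K2 × K2) where
  toFun x := (x.2.1, (x.1, x.2.2))
  invFun y := (y.2.1, y.1, y.2.2)
  left_inv x := rfl
  right_inv y := rfl

def sw3 : JT ≃ K2 × (K2 × K2) where
  toFun x := (x.2.2, (x.1, x.2.1))
  invFun y := (y.2.1, y.2.2, y.1)
  left_inv x := rfl
  right_inv y := rfl

def e1 (w : JT → ℂ) : JT → ℂ := apE w
def e2 (w : JT → ℂ) : JT → ℂ := fun x => apE (fun y => w (sw2.symm y)) (sw2 x)
def e3 (w : JT → ℂ) : JT → ℂ := fun x => apE (fun y => w (sw3.symm y)) (sw3 x)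

lemma e1_apply (w : JT → ℂ) (x : JT) :
    e1 w x = w x - (1/2) * (if x.1.1 = x.1.2 then 1 else 0) *
      ∑ i : Fin 2, w ((i,i), x.2.1, x.2.2) := rfl

lemma e2_apply (w : JT → ℂ) (x : JT) :
    e2 w x = w x - (1/2) * (if x.2.1.1 = x.2.1.2 then 1 else 0) *
      ∑ i : Fin 2, w (x.1, (i,i), x.2.2) := rfl

lemma e3_apply (w : JT → ℂ) (x : JT) :
    e3 w x = w x - (1/2) * (if x.2.2.1 = x.2.2.2 then 1 else 0) *
      ∑ i : Fin 2, w (x.1, x.2.1, (i,i)) := rfl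

lemma e2_eq (w : JT → ℂ) : e2 w = fun x => apE (fun y => w (sw2.symm y)) (sw2 x) := rfl

lemma comp_e2 (w : JT → ℂ) : (fun y => e2 w (sw2.symm y)) = apE (fun y => w (sw2.symm y)) := by
  funext y; rfl

lemma comp_e3 (w : JT → ℂ) : (fun y => e3 w (sw3.symm y)) = apE (fun y => w (sw3.symm y)) := by
  funext y; rfl

lemma nsq_e1_le (w : JT → ℂ) : nsq (e1 w) ≤ nsq w := nsq_apE_le w

lemma nsq_e2_comp (w : JT → ℂ) : nsq (e2 w) = nsq (apE (fun y => w (sw2.symm y))) := by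
  rw [← nsq_comp sw2.symm (e2 w)]
  congr 1
  all_goals exact funext (e2_symm w)

lemma nsq_e2_le (w : JT → ℂ) : nsq (e2 w) ≤ nsq w := by
  rw [nsq_e2_comp]
  calc nsq (apE (fun y => w (sw2.symm y)))
      ≤ nsq (fun y => w (sw2.symm y)) := nsq_apE_le _
    _ = nsq w := nsq_comp sw2.symm w

lemma nsq_e3_comp (w : JT → ℂ) : nsq (e3 w) = nsq (apE (fun y => w (sw3.symm y))) := by
  rw [← nsq_comp sw3.symm (e3 w)]
  congr 1
  all_goals exact funext (e3_symm w)

lemma nsq_e3_le (w : JT → ℂ) : nsq (e3 w) ≤ nsq w := by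
  rw [nsq_e3_comp]
  calc nsq (apE (fun y => w (sw3.symm y)))
      ≤ nsq (fun y => w (sw3.symm y)) := nsq_apE_le _
    _ = nsq w := nsq_comp sw3.symm w

lemma nsq_e1 (w : JT → ℂ) :
    nsq (e1 w) = nsq w - (1/2) * ∑ s : K2 × K2,
      Complex.normSq (∑ i : Fin 2, w ((i,i), s.1, s.2)) := nsq_apE w

lemma nsq_e2 (w : JT → ℂ) :
    nsq (e2 w) = nsq w - (1/2) * ∑ s : K2 × K2,
      Complex.normSq (∑ i : Fin 2, w (s.1, (i,i), s.2)) :=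
  calc nsq (e2 w) = nsq (apE (fun y => w (sw2.symm y))) := nsq_e2_comp w
    _ = nsq (fun y => w (sw2.symm y)) - (1/2) * ∑ s : K2 × K2,
        Complex.normSq (∑ i : Fin 2, w (s.1, (i,i), s.2)) := nsq_apE _
    _ = _ := by rw [nsq_comp sw2.symm w]

lemma nsq_e3 (w : JT → ℂ) :
    nsq (e3 w) = nsq w - (1/2) * ∑ s : K2 × K2,
      Complex.normSq (∑ i : Fin 2, w (s.1, s.2, (i,i))) :=
  calc nsq (e3 w) = nsq (apE (fun y => w (sw3.symm y))) := nsq_e3_comp w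
    _ = nsq (fun y => w (sw3.symm y)) - (1/2) * ∑ s : K2 × K2,
        Complex.normSq (∑ i : Fin 2, w (s.1, s.2, (i,i))) := nsq_apE _
    _ = _ := by rw [nsq_comp sw3.symm w]

lemma e2_symm (a : JT → ℂ) : ∀ t, e2 a (sw2.symm t) = apE (fun y => a (sw2.symm y)) t := by
  rintro ⟨t1, t2, t3⟩; rfl

lemma e3_symm (a : JT → ℂ) : ∀ t, e3 a (sw3.symm t) = apE (fun y => a (sw3.symm y)) t := by
  rintro ⟨t1, t2, t3⟩; rfl

lemma e1_adj (a b : JT → ℂ) : cip (e1 a) b = cip a (e1 b) := apE_adj a b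

lemma e2_adj (a b : JT → ℂ) : cip (e2 a) b = cip a (e2 b) := by
  calc cip (e2 a) b
      = cip (fun t => e2 a (sw2.symm t)) (fun t => b (sw2.symm t)) := (cip_comp sw2.symm _ _).symm
    _ = cip (apE (fun y => a (sw2.symm y))) (fun t => b (sw2.symm t)) := by
        rw [show (fun t => e2 a (sw2.symm t)) = apE (fun y => a (sw2.symm y)) from
          funext (e2_symm a)]
    _ = cip (fun y => a (sw2.symm y)) (apE (fun y => b (sw2.symm y))) := apE_adj _ _
    _ = cip a (e2 b) := by
        rw [show apE (fun y => b (sw2.symm y)) = (fun t => e2 b (sw2.symm t)) from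
          (funext (e2_symm b)).symm]
        exact cip_comp sw2.symm a (e2 b)

lemma e3_adj (a b : JT → ℂ) : cip (e3 a) b = cip a (e3 b) := by
  calc cip (e3 a) b
      = cip (fun t => e3 a (sw3.symm t)) (fun t => b (sw3.symm t)) := (cip_comp sw3.symm _ _).symm
    _ = cip (apE (fun y => a (sw3.symm y))) (fun t => b (sw3.symm t)) := by
        rw [show (fun t => e3 a (sw3.symm t)) = apE (fun y => a (sw3.symm y)) from
          funext (e3_symm a)]
    _ = cip (fun y => a (sw3.symm y)) (apE (fun y => b (sw3.symm y))) := apE_adj _ _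
    _ = cip a (e3 b) := by
        rw [show apE (fun y => b (sw3.symm y)) = (fun t => e3 b (sw3.symm t)) from
          (funext (e3_symm b)).symm]
        exact cip_comp sw3.symm a (e3 b)

lemma e1_cip_e1 (a b : JT → ℂ) : cip (e1 a) (e1 b) = cip a (e1 b) := cip_apE_apE a b

lemma e1_idem (w : JT → ℂ) : e1 (e1 w) = e1 w := apE_idem w

lemma e2_idem (w : JT → ℂ) : e2 (e2 w) = e2 w := by
  funext x
  show apE (fun y => e2 w (sw2.symm y)) (sw2 x) = _
  rw [comp_e2, apE_idem]
  rfl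

lemma e3_idem (w : JT → ℂ) : e3 (e3 w) = e3 w := by
  funext x
  show apE (fun y => e3 w (sw3.symm y)) (sw3 x) = _
  rw [comp_e3, apE_idem]
  rfl

lemma e1_e2_comm (w : JT → ℂ) : e1 (e2 w) = e2 (e1 w) := by
  funext x
  obtain ⟨x1, x2, x3⟩ := x
  simp only [e1_apply, e2_apply, Fin.sum_univ_two]
  ring

lemma e1_e3_comm (w : JT → ℂ) : e1 (e3 w) = e3 (e1 w) := by
  funext x
  obtain ⟨x1, x2, x3⟩ := x
  simp only [e1_apply, e3_apply, Fin.sum_univ_two]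
  ring

lemma e2_e3_comm (w : JT → ℂ) : e2 (e3 w) = e3 (e2 w) := by
  funext x
  obtain ⟨x1, x2, x3⟩ := x
  simp only [e2_apply, e3_apply, Fin.sum_univ_two]
  ring

/-- The "all three links orthogonal" projector, as an operator on vectors. -/
def Pv (w : JT → ℂ) : JT → ℂ := e1 (e2 (e3 w))

lemma cip_Pv (w : JT → ℂ) : cip w (Pv w) = (nsq (Pv w) : ℂ) := by
  have h : cip (Pv w) (Pv w) = cip w (Pv w) := by
    unfold Pv
    calc cip (e1 (e2 (e3 w))) (e1 (e2 (e3 w)))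
        = cip (e2 (e3 w)) (e1 (e2 (e3 w))) := e1_cip_e1 _ _
      _ = cip (e3 w) (e2 (e1 (e2 (e3 w)))) := e2_adj _ _
      _ = cip (e3 w) (e1 (e2 (e2 (e3 w)))) := by rw [← e1_e2_comm]
      _ = cip (e3 w) (e1 (e2 (e3 w))) := by rw [e2_idem]
      _ = cip w (e3 (e1 (e2 (e3 w)))) := e3_adj _ _
      _ = cip w (e1 (e3 (e2 (e3 w)))) := by rw [← e1_e3_comm]
      _ = cip w (e1 (e2 (e3 (e3 w)))) := by rw [← e2_e3_comm]
      _ = cip w (e1 (e2 (e3 w))) := by rw [e3_idem]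
  rw [← h, cip_self]

lemma nsq_Pv_le_e3 (w : JT → ℂ) : nsq (Pv w) ≤ nsq (e3 w) :=
  le_trans (nsq_e1_le _) (nsq_e2_le _)

lemma nsq_Pv_le_e2 (w : JT → ℂ) : nsq (Pv w) ≤ nsq (e2 w) := by
  have h : Pv w = e1 (e3 (e2 w)) := by unfold Pv; rw [e2_e3_comm]
  rw [h]
  exact le_trans (nsq_e1_le _) (nsq_e3_le _)

lemma nsq_Pv_le_e1 (w : JT → ℂ) : nsq (Pv w) ≤ nsq (e1 w) := by
  have h : Pv w = e2 (e3 (e1 w)) := by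
    unfold Pv
    rw [e1_e2_comm, e1_e3_comm]
  rw [h]
  exact le_trans (nsq_e2_le _) (nsq_e3_le _)

/-! ### The witness -/

def E4 (k l : K2) : ℂ :=
  (if k = l then 1 else 0)
    - (1/2) * ((if k.1 = k.2 then 1 else 0) * (if l.1 = l.2 then 1 else 0))

def iot : JT ≃ JT where
  toFun l := ((l.1.1, l.2.1.1), (l.1.2, l.2.2.1), (l.2.1.2, l.2.2.2))
  invFun x := ((x.1.1, x.2.1.1), (x.1.2, x.2.2.1), (x.2.1.2, x.2.2.2))
  left_inv := by rintro ⟨⟨a1,b1⟩,⟨a2,c1⟩,⟨b2,c2⟩⟩; rfl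
  right_inv := by rintro ⟨⟨a1,a2⟩,⟨b1,b2⟩,⟨c1,c2⟩⟩; rfl

def Dg (x : JT) : ℂ :=
  (if x.1.1 = x.2.1.1 then 1 else 0) * (if x.1.2 = x.2.2.1 then 1 else 0) *
    (if x.2.1.2 = x.2.2.2 then 1 else 0)

def Pi0 (x y : JT) : ℂ :=
  E4 (x.1.1, x.2.1.1) (y.1.1, y.2.1.1) * E4 (x.1.2, x.2.2.1) (y.1.2, y.2.2.1) *
    E4 (x.2.1.2, x.2.2.2) (y.2.1.2, y.2.2.2)

def Wit (x y : JT) : ℂ := (1/2) * (Dg x * Dg y) + Pi0 x y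

def Lfun (ρ : Matrix JT JT ℂ) : ℂ := ∑ x, ∑ y, Wit x y * ρ y x

lemma star_Dg (x : JT) : star (Dg x) = Dg x := by
  unfold Dg
  simp [apply_ite (star : ℂ → ℂ)]

lemma slot_sum (k : K2) (f : K2 → ℂ) :
    ∑ m : K2, E4 k m * f m
      = f k - (1/2) * (if k.1 = k.2 then 1 else 0) * ∑ i : Fin 2, f (i, i) := by
  obtain ⟨ki, kj⟩ := k
  fin_cases ki <;> fin_cases kj <;>
    · simp [E4, Fintype.sum_prod_type, Fin.sum_univ_two, Prod.ext_iff]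
      try ring

lemma mulvec_Pi0 (u : JT → ℂ) (a : JT) :
    (∑ b : JT, (E4 a.1 b.1 * E4 a.2.1 b.2.1 * E4 a.2.2 b.2.2) * u b) = Pv u a := by
  obtain ⟨a1, a2, a3⟩ := a
  have h3 : ∀ b1 b2 : K2, ∑ b3 : K2, (E4 a1 b1 * E4 a2 b2 * E4 a3 b3) * u (b1, b2, b3)
      = (E4 a1 b1 * E4 a2 b2) * e3 u (b1, b2, a3) := by
    intro b1 b2
    have : ∀ b3 : K2, (E4 a1 b1 * E4 a2 b2 * E4 a3 b3) * u (b1, b2, b3)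
        = (E4 a1 b1 * E4 a2 b2) * (E4 a3 b3 * u (b1, b2, b3)) := fun b3 => by ring
    rw [Finset.sum_congr rfl fun b3 _ => this b3, ← Finset.mul_sum,
      slot_sum a3 (fun m => u (b1, b2, m)), e3_apply]
  have h2 : ∀ b1 : K2, ∑ b2 : K2, (E4 a1 b1 * E4 a2 b2) * e3 u (b1, b2, a3)
      = E4 a1 b1 * e2 (e3 u) (b1, a2, a3) := by
    intro b1
    have : ∀ b2 : K2, (E4 a1 b1 * E4 a2 b2) * e3 u (b1, b2, a3)
        = E4 a1 b1 * (E4 a2 b2 * e3 u (b1, b2, a3)) := fun b2 => by ring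
    rw [Finset.sum_congr rfl fun b2 _ => this b2, ← Finset.mul_sum,
      slot_sum a2 (fun m => e3 u (b1, m, a3)), e2_apply]
  calc ∑ b : JT, (E4 a1 b.1 * E4 a2 b.2.1 * E4 a3 b.2.2) * u b
      = ∑ b1 : K2, ∑ bc : K2 × K2, (E4 a1 b1 * E4 a2 bc.1 * E4 a3 bc.2) * u (b1, bc) := by
        rw [Fintype.sum_prod_type]
    _ = ∑ b1 : K2, ∑ b2 : K2, ∑ b3 : K2, (E4 a1 b1 * E4 a2 b2 * E4 a3 b3) * u (b1, b2, b3) := by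
        exact Finset.sum_congr rfl fun b1 _ => by rw [Fintype.sum_prod_type]
    _ = ∑ b1 : K2, E4 a1 b1 * e2 (e3 u) (b1, a2, a3) := by
        refine Finset.sum_congr rfl fun b1 _ => ?_
        rw [Finset.sum_congr rfl fun b2 _ => h3 b1 b2, h2 b1]
    _ = Pv u (a1, a2, a3) := by
        rw [slot_sum a1 (fun m => e2 (e3 u) (m, a2, a3))]
        rfl

lemma quad_Pi0 (u : JT → ℂ) :
    (∑ x : JT, ∑ y : JT, star (u x) * (Pi0 x y * u y))
      = ((nsq (Pv (fun t => u (iot t))) : ℝ) : ℂ) := by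
  set w : JT → ℂ := fun t => u (iot t) with hw
  have hre : (∑ x : JT, ∑ y : JT, star (u x) * (Pi0 x y * u y))
      = ∑ a : JT, ∑ b : JT, star (w a) * (Pi0 (iot a) (iot b) * w b) := by
    rw [← Equiv.sum_comp iot (fun x => ∑ y : JT, star (u x) * (Pi0 x y * u y))]
    exact Finset.sum_congr rfl fun a _ =>
      (Equiv.sum_comp iot (fun y => star (u (iot a)) * (Pi0 (iot a) y * u y))).symm
  rw [hre]
  have hinner : ∀ a : JT, ∑ b : JT, star (w a) * (Pi0 (iot a) (iot b) * w b)
      = star (w a) * Pv w a := by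
    intro a
    have : ∀ b : JT, star (w a) * (Pi0 (iot a) (iot b) * w b)
        = star (w a) * ((E4 a.1 b.1 * E4 a.2.1 b.2.1 * E4 a.2.2 b.2.2) * w b) := by
      intro b; rfl
    rw [Finset.sum_congr rfl fun b _ => this b, ← Finset.mul_sum, mulvec_Pi0 w a]
  rw [Finset.sum_congr rfl fun a _ => hinner a]
  exact cip_Pv w

/-! ### Quadratic form of the witness -/

def Sv (v : JT → ℂ) : ℂ := ∑ x, Dg x * v x

lemma nsq_of_unit (v : JT → ℂ) (h : UnitVec v) : nsq v = 1 := by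
  unfold UnitVec at h
  have : ((nsq v : ℝ) : ℂ) = (1 : ℂ) := by
    rw [← h]
    unfold nsq
    push_cast
    refine Finset.sum_congr rfl fun x _ => ?_
    rw [Complex.star_def, mul_comm, Complex.mul_conj]
  exact_mod_cast this

lemma Lfun_vecProj (v : JT → ℂ) :
    Lfun (vecProj v)
      = ((((1:ℝ)/2) * Complex.normSq (Sv v) + nsq (Pv (fun t => v (iot t))) : ℝ) : ℂ) := by
  unfold Lfun
  have hsplit : ∀ x y : JT, Wit x y * (vecProj v) y x
      = (1/2) * ((Dg x * star (v x)) * (Dg y * v y)) + star (v x) * (Pi0 x y * v y) := by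
    intro x y
    show (Wit x y) * (v y * star (v x)) = _
    unfold Wit
    ring
  simp only [hsplit, Finset.sum_add_distrib]
  have h1 : ∑ x : JT, ∑ y : JT, (1/2 : ℂ) * ((Dg x * star (v x)) * (Dg y * v y))
      = (1/2) * ((Complex.normSq (Sv v) : ℝ) : ℂ) := by
    have e1 : ∑ x : JT, ∑ y : JT, (1/2 : ℂ) * ((Dg x * star (v x)) * (Dg y * v y))
        = (1/2) * ((∑ x : JT, Dg x * star (v x)) * (∑ y : JT, Dg y * v y)) := by
      rw [Finset.sum_mul_sum, Finset.mul_sum]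
      refine Finset.sum_congr rfl fun x _ => ?_
      rw [Finset.mul_sum]
    have e2 : (∑ x : JT, Dg x * star (v x)) = star (Sv v) := by
      unfold Sv
      rw [star_sum]
      refine Finset.sum_congr rfl fun x _ => ?_
      rw [star_mul', star_Dg]
    have e3 : star (Sv v) * Sv v = ((Complex.normSq (Sv v) : ℝ) : ℂ) := by
      rw [Complex.star_def, mul_comm, Complex.mul_conj]
    rw [e1, e2, ← e3]
    rfl
  rw [h1, quad_Pi0 v]
  push_cast
  ring

/-! ### Cut bounds -/

lemma sum_DJ (u : JT → ℂ) :
    ∑ a : JT, ((if a.1.1 = a.1.2 then (1:ℂ) else 0) * (if a.2.1.1 = a.2.1.2 then 1 else 0) *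
        (if a.2.2.1 = a.2.2.2 then 1 else 0)) * u a
      = ∑ i1 : Fin 2, ∑ i2 : Fin 2, ∑ i3 : Fin 2, u ((i1,i1),(i2,i2),(i3,i3)) := by
  simp only [Fintype.sum_prod_type]
  simp only [Fin.sum_univ_two]
  norm_num

lemma Sv_explicit (v : JT → ℂ) :
    Sv v = ∑ i1 : Fin 2, ∑ i2 : Fin 2, ∑ i3 : Fin 2,
      v (iot ((i1,i1),(i2,i2),(i3,i3))) := by
  unfold Sv
  rw [← Equiv.sum_comp iot (fun x => Dg x * v x)]
  exact sum_DJ (fun a => v (iot a))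

lemma cs_normSq (f h : K2 → ℂ) :
    Complex.normSq (∑ k, f k * h k)
      ≤ (∑ k, Complex.normSq (f k)) * (∑ k, Complex.normSq (h k)) := by
  have habs : ‖∑ k, f k * h k‖ ≤ ∑ k, ‖f k‖ * ‖h k‖ := by
    calc ‖∑ k, f k * h k‖ ≤ ∑ k, ‖f k * h k‖ :=
          norm_sum_le _ _
      _ = ∑ k, ‖f k‖ * ‖h k‖ := by simp [norm_mul]
  have hcs := Finset.sum_mul_sq_le_sq_mul_sq Finset.univ
    (fun k => ‖f k‖) (fun k => ‖h k‖)
  calc Complex.normSq (∑ k, f k * h k) = (‖∑ k, f k * h k‖)^2 :=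
        (Complex.sq_norm _).symm
    _ ≤ (∑ k, ‖f k‖ * ‖h k‖)^2 := by
        exact pow_le_pow_left₀ (norm_nonneg _) habs 2
    _ ≤ (∑ k, (‖f k‖)^2) * (∑ k, (‖h k‖)^2) := hcs
    _ = _ := by simp [Complex.sq_norm]

lemma quad_bound (v : JT → ℂ) (h1 : UnitVec v) (hp : ProdAcross3 v) :
    ((1:ℝ)/2) * Complex.normSq (Sv v) + nsq (Pv (fun t => v (iot t))) ≤ 1 := by
  set w : JT → ℂ := fun t => v (iot t) with hwdef
  have hw1 : nsq w = 1 := by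
    rw [show nsq w = nsq v from nsq_comp iot v]
    exact nsq_of_unit v h1
  rcases hp with ⟨f, g, hfg⟩ | ⟨f, g, hfg⟩ | ⟨f, g, hfg⟩
  · -- cut A | BC ; inside link 3
    have hw_eq : ∀ a : JT, w a
        = f (a.1.1, a.2.1.1) * g ((a.1.2, a.2.2.1), (a.2.1.2, a.2.2.2)) :=
      fun a => hfg (iot a)
    set h : K2 → ℂ := fun bc => ∑ i : Fin 2, g ((bc.1, i), (bc.2, i)) with hh
    have hSid : Sv v = ∑ k : K2, f k * h k := by
      rw [Sv_explicit]
      simp only [show ∀ a : JT, v (iot a) = w a from fun a => rfl, hw_eq, hh]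
      simp only [Fintype.sum_prod_type, Fin.sum_univ_two]
      ring
    have hinner : ∀ s : K2 × K2, (∑ i : Fin 2, w (s.1, s.2, (i,i)))
        = f (s.1.1, s.2.1) * h (s.1.2, s.2.2) := by
      intro s
      simp only [hw_eq, hh]
      rw [Finset.mul_sum]
    have hdef : (∑ s : K2 × K2, Complex.normSq (∑ i : Fin 2, w (s.1, s.2, (i,i))))
        = (∑ k, Complex.normSq (f k)) * (∑ k, Complex.normSq (h k)) := by
      simp only [hinner, Complex.normSq_mul]
      simp only [Fintype.sum_prod_type, Fin.sum_univ_two]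
      ring
    have hS : Complex.normSq (Sv v)
        ≤ (∑ k, Complex.normSq (f k)) * (∑ k, Complex.normSq (h k)) := by
      rw [hSid]; exact cs_normSq f h
    have hD := nsq_Pv_le_e3 w
    rw [nsq_e3, hw1, hdef] at hD
    linarith
  · -- cut B | AC ; inside link 2
    have hw_eq : ∀ a : JT, w a
        = f (a.1.2, a.2.2.1) * g ((a.1.1, a.2.1.1), (a.2.1.2, a.2.2.2)) :=
      fun a => hfg (iot a)
    set h : K2 → ℂ := fun ac => ∑ i : Fin 2, g ((ac.1, i), (i, ac.2)) with hh
    have hSid : Sv v = ∑ k : K2, f k * h k := by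
      rw [Sv_explicit]
      simp only [show ∀ a : JT, v (iot a) = w a from fun a => rfl, hw_eq, hh]
      simp only [Fintype.sum_prod_type, Fin.sum_univ_two]
      ring
    have hinner : ∀ s : K2 × K2, (∑ i : Fin 2, w (s.1, (i,i), s.2))
        = f (s.1.2, s.2.1) * h (s.1.1, s.2.2) := by
      intro s
      simp only [hw_eq, hh]
      rw [Finset.mul_sum]
    have hdef : (∑ s : K2 × K2, Complex.normSq (∑ i : Fin 2, w (s.1, (i,i), s.2)))
        = (∑ k, Complex.normSq (f k)) * (∑ k, Complex.normSq (h k)) := by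
      simp only [hinner, Complex.normSq_mul]
      simp only [Fintype.sum_prod_type, Fin.sum_univ_two]
      ring
    have hS : Complex.normSq (Sv v)
        ≤ (∑ k, Complex.normSq (f k)) * (∑ k, Complex.normSq (h k)) := by
      rw [hSid]; exact cs_normSq f h
    have hD := nsq_Pv_le_e2 w
    rw [nsq_e2, hw1, hdef] at hD
    linarith
  · -- cut C | AB ; inside link 1
    have hw_eq : ∀ a : JT, w a
        = f (a.2.1.2, a.2.2.2) * g ((a.1.1, a.2.1.1), (a.1.2, a.2.2.1)) :=
      fun a => hfg (iot a)
    set h : K2 → ℂ := fun ab => ∑ i : Fin 2, g ((i, ab.1), (i, ab.2)) with hh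
    have hSid : Sv v = ∑ k : K2, f k * h k := by
      rw [Sv_explicit]
      simp only [show ∀ a : JT, v (iot a) = w a from fun a => rfl, hw_eq, hh]
      simp only [Fintype.sum_prod_type, Fin.sum_univ_two]
      ring
    have hinner : ∀ s : K2 × K2, (∑ i : Fin 2, w ((i,i), s.1, s.2))
        = f (s.1.2, s.2.2) * h (s.1.1, s.2.1) := by
      intro s
      simp only [hw_eq, hh]
      rw [Finset.mul_sum]
    have hdef : (∑ s : K2 × K2, Complex.normSq (∑ i : Fin 2, w ((i,i), s.1, s.2)))
        = (∑ k, Complex.normSq (f k)) * (∑ k, Complex.normSq (h k)) := by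
      simp only [hinner, Complex.normSq_mul]
      simp only [Fintype.sum_prod_type, Fin.sum_univ_two]
      ring
    have hS : Complex.normSq (Sv v)
        ≤ (∑ k, Complex.normSq (f k)) * (∑ k, Complex.normSq (h k)) := by
      rw [hSid]; exact cs_normSq f h
    have hD := nsq_Pv_le_e1 w
    rw [nsq_e1, hw1, hdef] at hD
    linarith

/-! ### Value of the witness on the triangle network state -/

lemma sum_factor3_vec (a b c : K2 → ℂ) :
    ∑ y : JT, a y.1 * b y.2.1 * c y.2.2 = (∑ k, a k) * (∑ k, b k) * (∑ k, c k) := by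
  have hbc : ∑ z : K2 × K2, b z.1 * c z.2 = (∑ k, b k) * (∑ k, c k) := by
    rw [Fintype.sum_prod_type]
    exact (Finset.sum_mul_sum _ _ _ _).symm
  rw [Fintype.sum_prod_type]
  have hy : ∀ y1 : K2, ∑ z : K2 × K2, a y1 * b z.1 * c z.2
      = a y1 * ((∑ k, b k) * (∑ k, c k)) := by
    intro y1
    rw [← hbc, Finset.mul_sum]
    exact Finset.sum_congr rfl fun z _ => by ring
  rw [Finset.sum_congr rfl fun y1 _ => hy y1, ← Finset.sum_mul, mul_assoc]

lemma sum_factor3 (A B C : K2 → K2 → ℂ) :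
    ∑ x : JT, ∑ y : JT, A x.1 y.1 * B x.2.1 y.2.1 * C x.2.2 y.2.2
      = (∑ k, ∑ l, A k l) * (∑ k, ∑ l, B k l) * (∑ k, ∑ l, C k l) := by
  have hx : ∀ x : JT, ∑ y : JT, A x.1 y.1 * B x.2.1 y.2.1 * C x.2.2 y.2.2
      = (∑ l, A x.1 l) * (∑ l, B x.2.1 l) * (∑ l, C x.2.2 l) :=
    fun x => sum_factor3_vec (A x.1) (B x.2.1) (C x.2.2)
  rw [Finset.sum_congr rfl fun x _ => hx x]
  exact sum_factor3_vec (fun k => ∑ l, A k l) (fun k => ∑ l, B k l) (fun k => ∑ l, C k l)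

lemma vecProj_mE (k l : K2) :
    vecProj (maxEntVec 2) k l = if k.1 = k.2 ∧ l.1 = l.2 then (1/2 : ℂ) else 0 := by
  have hhalf : ((Real.sqrt 2 : ℝ) : ℂ)⁻¹ * ((Real.sqrt 2 : ℝ) : ℂ)⁻¹ = 2⁻¹ := by
    rw [← mul_inv, ← Complex.ofReal_mul, Real.mul_self_sqrt (by norm_num : (0:ℝ) ≤ 2)]
    norm_num
  show maxEntVec 2 k * star (maxEntVec 2 l) = _
  unfold maxEntVec
  by_cases h1 : k.1 = k.2 <;> by_cases h2 : l.1 = l.2 <;>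
    simp [h1, h2, hhalf]

lemma iso_apply (p : ℝ) (k l : K2) :
    isoState 2 p k l
      = (p : ℂ) * (if k.1 = k.2 ∧ l.1 = l.2 then (1/2 : ℂ) else 0)
        + (((1 - p) / 4 : ℝ) : ℂ) * (if k = l then 1 else 0) := by
  unfold isoState
  have h4 : ((2:ℕ) ^ 2 : ℝ) = (4 : ℝ) := by norm_num
  simp [Matrix.add_apply, Matrix.smul_apply, Matrix.one_apply, vecProj_mE, smul_eq_mul, h4]
  norm_num

lemma sum_A_val (p : ℝ) :
    ∑ k : K2, ∑ l : K2,
        ((if k.1 = k.2 then (1:ℂ) else 0) * (if l.1 = l.2 then 1 else 0)) * isoState 2 p l k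
      = (3 * (p:ℂ) + 1)/2 := by
  simp only [iso_apply, Fintype.sum_prod_type, Fin.sum_univ_two]
  norm_num
  push_cast
  ring

lemma sum_E_val (p : ℝ) :
    ∑ k : K2, ∑ l : K2, E4 k l * isoState 2 p l k = (3 - 3 * (p:ℂ))/4 := by
  simp only [iso_apply, E4, Fintype.sum_prod_type, Fin.sum_univ_two]
  norm_num
  push_cast
  ring

lemma Lfun_state (p : ℝ) :
    Lfun (triangleNet 2 p)
      = (1/2) * ((3 * (p:ℂ) + 1)/2)^3 + ((3 - 3 * (p:ℂ))/4)^3 := by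
  unfold Lfun
  have hre : (∑ x : JT, ∑ y : JT, Wit x y * (triangleNet 2 p) y x)
      = ∑ a : JT, ∑ b : JT, Wit (iot a) (iot b) * (triangleNet 2 p) (iot b) (iot a) := by
    rw [← Equiv.sum_comp iot (fun x => ∑ y : JT, Wit x y * (triangleNet 2 p) y x)]
    exact Finset.sum_congr rfl fun a _ =>
      (Equiv.sum_comp iot (fun y => Wit (iot a) y * (triangleNet 2 p) y (iot a))).symm
  rw [hre]
  have hW : ∀ a b : JT, Wit (iot a) (iot b) * (triangleNet 2 p) (iot b) (iot a)
      = (1/2) * ((((if a.1.1 = a.1.2 then (1:ℂ) else 0) * (if b.1.1 = b.1.2 then 1 else 0)) * isoState 2 p b.1 a.1)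
          * (((if a.2.1.1 = a.2.1.2 then (1:ℂ) else 0) * (if b.2.1.1 = b.2.1.2 then 1 else 0)) * isoState 2 p b.2.1 a.2.1)
          * (((if a.2.2.1 = a.2.2.2 then (1:ℂ) else 0) * (if b.2.2.1 = b.2.2.2 then 1 else 0)) * isoState 2 p b.2.2 a.2.2))
        + ((E4 a.1 b.1 * isoState 2 p b.1 a.1)
            * (E4 a.2.1 b.2.1 * isoState 2 p b.2.1 a.2.1)
            * (E4 a.2.2 b.2.2 * isoState 2 p b.2.2 a.2.2)) := by
    intro a b
    obtain ⟨⟨a11, a12⟩, ⟨a21, a22⟩, ⟨a31, a32⟩⟩ := a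
    obtain ⟨⟨b11, b12⟩, ⟨b21, b22⟩, ⟨b31, b32⟩⟩ := b
    show (Wit _ _) * (isoState 2 p _ _ * isoState 2 p _ _ * isoState 2 p _ _) = _
    simp only [Wit, Dg, Pi0, iot, Equiv.coe_fn_mk]
    by_cases h1 : a11 = a12 <;> by_cases h2 : a21 = a22 <;> by_cases h3 : a31 = a32 <;>
      by_cases h4 : b11 = b12 <;> by_cases h5 : b21 = b22 <;> by_cases h6 : b31 = b32 <;>
      simp only [h1, h2, h3, h4, h5, h6, if_true, if_false] <;> ring
  simp only [hW, Finset.sum_add_distrib]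
  have h1 := sum_factor3
    (fun k l => ((if k.1 = k.2 then (1:ℂ) else 0) * (if l.1 = l.2 then 1 else 0)) * isoState 2 p l k)
    (fun k l => ((if k.1 = k.2 then (1:ℂ) else 0) * (if l.1 = l.2 then 1 else 0)) * isoState 2 p l k)
    (fun k l => ((if k.1 = k.2 then (1:ℂ) else 0) * (if l.1 = l.2 then 1 else 0)) * isoState 2 p l k)
  have h2 := sum_factor3
    (fun k l => E4 k l * isoState 2 p l k)
    (fun k l => E4 k l * isoState 2 p l k)
    (fun k l => E4 k l * isoState 2 p l k)
  have hmulsum : ∀ x : JT, ∑ y : JT, (1/2 : ℂ) *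
      ((((if x.1.1 = x.1.2 then (1:ℂ) else 0) * (if y.1.1 = y.1.2 then 1 else 0)) * isoState 2 p y.1 x.1)
        * (((if x.2.1.1 = x.2.1.2 then (1:ℂ) else 0) * (if y.2.1.1 = y.2.1.2 then 1 else 0)) * isoState 2 p y.2.1 x.2.1)
        * (((if x.2.2.1 = x.2.2.2 then (1:ℂ) else 0) * (if y.2.2.1 = y.2.2.2 then 1 else 0)) * isoState 2 p y.2.2 x.2.2))
      = (1/2 : ℂ) * ∑ y : JT,
      ((((if x.1.1 = x.1.2 then (1:ℂ) else 0) * (if y.1.1 = y.1.2 then 1 else 0)) * isoState 2 p y.1 x.1)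
        * (((if x.2.1.1 = x.2.1.2 then (1:ℂ) else 0) * (if y.2.1.1 = y.2.1.2 then 1 else 0)) * isoState 2 p y.2.1 x.2.1)
        * (((if x.2.2.1 = x.2.2.2 then (1:ℂ) else 0) * (if y.2.2.1 = y.2.2.2 then 1 else 0)) * isoState 2 p y.2.2 x.2.2)) :=
    fun x => (Finset.mul_sum _ _ _).symm
  rw [Finset.sum_congr rfl fun x _ => hmulsum x, ← Finset.mul_sum, h1, h2,
    sum_A_val, sum_E_val]
  ring

/-! ### Arithmetic -/

lemma arith (p : ℝ) (hp0 : 0 ≤ p) (hp : (2*Real.sqrt 5 - 3)/3 < p) :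
    1 < (1/2) * ((3*p+1)/2)^3 + ((3 - 3*p)/4)^3 := by
  have hs2 : Real.sqrt 5 ^ 2 = 5 := Real.sq_sqrt (by norm_num)
  have hs0 : 0 ≤ Real.sqrt 5 := Real.sqrt_nonneg 5
  set s := Real.sqrt 5 with hs
  set q : ℝ := (3*p+1)/4 with hqdef
  have hq : (s - 1)/2 < q := by rw [hqdef]; linarith
  have hq0 : 0 < q := by rw [hqdef]; linarith
  have hfac : 0 < q + (s+1)/2 := by positivity
  have ht : 0 < q - (s-1)/2 := by linarith
  have key : 0 < q * ((q - (s-1)/2) * (q + (s+1)/2)) := mul_pos hq0 (mul_pos ht hfac)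
  have expand : (1/2) * ((3*p+1)/2)^3 + ((3 - 3*p)/4)^3 - 1
      = 3 * (q * ((q - (s-1)/2) * (q + (s+1)/2))) := by
    have h2 : (3*p+1)/2 = 2*q := by rw [hqdef]; ring
    have h1 : (3 - 3*p)/4 = 1 - q := by rw [hqdef]; ring
    rw [h2, h1]
    linear_combination (3 * q / 4) * hs2
  linarith

lemma Lfun_decomp (m : ℕ) (w : Fin m → ℝ) (u : Fin m → JT → ℂ) :
    Lfun (∑ k, (w k : ℂ) • vecProj (u k)) = ∑ k, (w k : ℂ) * Lfun (vecProj (u k)) := by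
  unfold Lfun
  have hterm : ∀ x y : JT, Wit x y * ((∑ k, (w k : ℂ) • vecProj (u k)) y x)
      = ∑ k, (w k : ℂ) * (Wit x y * vecProj (u k) y x) := by
    intro x y
    rw [Matrix.sum_apply, Finset.mul_sum]
    exact Finset.sum_congr rfl fun k _ => by rw [Matrix.smul_apply, smul_eq_mul]; ring
  simp only [hterm]
  calc ∑ x : JT, ∑ y : JT, ∑ k, (w k : ℂ) * (Wit x y * vecProj (u k) y x)
      = ∑ x : JT, ∑ k, ∑ y : JT, (w k : ℂ) * (Wit x y * vecProj (u k) y x) :=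
        Finset.sum_congr rfl fun x _ => Finset.sum_comm
    _ = ∑ k, ∑ x : JT, ∑ y : JT, (w k : ℂ) * (Wit x y * vecProj (u k) y x) :=
        Finset.sum_comm
    _ = ∑ k, (w k : ℂ) * ∑ x : JT, ∑ y : JT, Wit x y * vecProj (u k) y x := by
        refine Finset.sum_congr rfl fun k _ => ?_
        rw [Finset.mul_sum]
        exact Finset.sum_congr rfl fun x _ => (Finset.mul_sum _ _ _).symm

end TriangleGME

/-- **GME of the qubit triangle network.** If `p > (2√5 − 3)/3`, the triangle network of
2-dimensional isotropic states, viewed as a tripartite state of `A = (A₁, A₂)`,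
`B = (B₁, B₂)`, `C = (C₁, C₂)`, is genuinely multipartite entangled. -/
theorem triangle_network_GME (p : ℝ) (hp0 : 0 ≤ p) (hp1 : p ≤ 1)
    (hp : (2 * Real.sqrt 5 - 3) / 3 < p) :
    ¬ Bisep3 (triangleNet 2 p) := by
  
  intro hB
  obtain ⟨m, w, u, hw0, hw1, hup, heq⟩ := hB
  have key : ∑ k, (w k : ℂ) * TriangleGME.Lfun (vecProj (u k))
      = (1/2) * ((3*(p:ℂ)+1)/2)^3 + ((3 - 3*(p:ℂ))/4)^3 := by
    rw [← TriangleGME.Lfun_decomp m w u, ← heq, TriangleGME.Lfun_state]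
  have hr : ∀ k, ∃ r : ℝ, TriangleGME.Lfun (vecProj (u k)) = (r : ℂ) ∧ r ≤ 1 := by
    intro k
    refine ⟨_, TriangleGME.Lfun_vecProj (u k), TriangleGME.quad_bound (u k) (hup k).1 (hup k).2⟩
  choose r hrev hrle using hr
  have hreal : ∑ k, w k * r k = (1/2) * ((3*p+1)/2)^3 + ((3 - 3*p)/4)^3 := by
    have hC : ((∑ k, w k * r k : ℝ) : ℂ)
        = (((1/2) * ((3*p+1)/2)^3 + ((3 - 3*p)/4)^3 : ℝ) : ℂ) := by
      push_cast
      rw [← key]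
      exact Finset.sum_congr rfl fun k _ => by rw [hrev k]
    exact_mod_cast hC
  have hle : ∑ k, w k * r k ≤ 1 := by
    calc ∑ k, w k * r k ≤ ∑ k, w k :=
          Finset.sum_le_sum fun k _ => mul_le_of_le_one_right (hw0 k) (hrle k)
      _ = 1 := hw1
  have harith := TriangleGME.arith p hp0 hp
  rw [hreal] at hle
  linarith
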